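/- Let X ∼ N(μ, I_p) and let ζ(x,θ) = x + ∇ log m(x) be the posterior mean under a mixture marginal m(x) = Σ_{j=0}^d w_j g_j(x). If each g_j and ∇g_j is almost differentiable and E|∇²g_j(X_i)/g_j(X_i)| < ∞ and E(∇ log g_j(X_i))² < ∞ for all i,j, then the risk satisfies E Σ_{i=1}^p (μ_i − ζ(X_i,θ))² = p − E Σ_{i=1}^p D(X_i), where D(x) = Σ_{j=0}^d ρ_j(x)D_j(x) − Σ_{0≤j<k≤d} ρ_j(x)ρ_k(x)(ζ_j(x)−ζ_k(x))², with ρ_j(x) = w_j g_j(x)/m(x), D_j(x) = (∇ log g_j(x))² − 2∇²g_j(x)/g_j(x), and ζ_j(x) = x + ∇ log g_j(x). -/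

import Mathlib

open MeasureTheory Real BigOperators

/-- Standard normal density. -/
noncomputable def stdN (x : ℝ) : ℝ := (Real.sqrt (2 * Real.pi))⁻¹ * Real.exp (-x ^ 2 / 2)

/-- Mixture marginal density `m(x) = ∑_{j=0}^d w_j g_j(x)`. -/
noncomputable def mmix (d : ℕ) (w : Fin (d + 1) → ℝ) (g : Fin (d + 1) → ℝ → ℝ) (x : ℝ) : ℝ :=
  ∑ j : Fin (d + 1), w j * g j x

/-- Posterior mean (Tweedie's formula) `ζ(x) = x + ∇ log m(x)`. -/
noncomputable def zeta (d : ℕ) (w : Fin (d + 1) → ℝ) (g : Fin (d + 1) → ℝ → ℝ) (x : ℝ) : ℝ :=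
  x + deriv (fun y => Real.log (mmix d w g y)) x

/-- Posterior component probabilities `ρ_j(x) = w_j g_j(x)/m(x)`. -/
noncomputable def rho (d : ℕ) (w : Fin (d + 1) → ℝ) (g : Fin (d + 1) → ℝ → ℝ)
    (j : Fin (d + 1)) (x : ℝ) : ℝ :=
  w j * g j x / mmix d w g x

/-- Component posterior means `ζ_j(x) = x + ∇ log g_j(x)`. -/
noncomputable def zetaj (d : ℕ) (g : Fin (d + 1) → ℝ → ℝ) (j : Fin (d + 1)) (x : ℝ) : ℝ :=
  x + deriv (fun y => Real.log (g j y)) x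

/-- `D_j(x) = (∇ log g_j(x))² − 2 ∇²g_j(x)/g_j(x)`. -/
noncomputable def Dj (d : ℕ) (g : Fin (d + 1) → ℝ → ℝ) (j : Fin (d + 1)) (x : ℝ) : ℝ :=
  (deriv (fun y => Real.log (g j y)) x) ^ 2 - 2 * deriv (deriv (g j)) x / g j x

/-- The unbiased risk-reduction function
`D(x) = ∑_j ρ_j D_j − ∑_{j<k} ρ_j ρ_k (ζ_j − ζ_k)²`. -/
noncomputable def Dfun (d : ℕ) (w : Fin (d + 1) → ℝ) (g : Fin (d + 1) → ℝ → ℝ) (x : ℝ) : ℝ :=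
  (∑ j : Fin (d + 1), rho d w g j x * Dj d g j x) -
    ∑ j : Fin (d + 1), ∑ k : Fin (d + 1),
      if j < k then rho d w g j x * rho d w g k x * (zetaj d g j x - zetaj d g k x) ^ 2 else 0

/-! ### Auxiliary lemmas about the standard normal density -/

lemma stdN_eq (x : ℝ) : stdN x = (Real.sqrt (2 * Real.pi))⁻¹ * Real.exp (-((1:ℝ)/2) * x ^ 2) := by
  unfold stdN; ring_nf

lemma stdN_pos (x : ℝ) : 0 < stdN x := by
  unfold stdN; positivity

lemma stdN_continuous : Continuous stdN := by
  unfold stdN; continuity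

lemma hasDerivAt_stdN (x : ℝ) : HasDerivAt stdN (-x * stdN x) x := by
  have h : HasDerivAt (fun y : ℝ => -y ^ 2 / 2) (-x) x := by
    have := ((hasDerivAt_pow 2 x).neg).div_const 2
    simpa using this.congr_deriv (by ring)
  have := ((h.exp).const_mul ((Real.sqrt (2 * Real.pi))⁻¹))
  unfold stdN
  refine this.congr_deriv ?_
  ring

lemma integrable_stdN : Integrable stdN := by
  have : Integrable (fun x : ℝ => Real.exp (-((1:ℝ)/2) * x ^ 2)) := by
    simpa [sq] using integrable_exp_neg_mul_sq (by norm_num : (0:ℝ) < 1/2)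
  refine (this.const_mul ((Real.sqrt (2 * Real.pi))⁻¹)).congr ?_
  filter_upwards with x
  rw [stdN_eq]

lemma integral_stdN : ∫ x : ℝ, stdN x = 1 := by
  have h := integral_gaussian (1/2 : ℝ)
  simp only [stdN_eq]
  rw [integral_const_mul, h, show Real.pi / (1/2) = 2 * Real.pi by ring]
  exact inv_mul_cancel₀ (ne_of_gt (Real.sqrt_pos.2 (by positivity)))

lemma integrable_mul_stdN : Integrable (fun x : ℝ => x * stdN x) := by
  have : Integrable (fun x : ℝ => x * Real.exp (-((1:ℝ)/2) * x ^ 2)) := by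
    simpa [sq] using integrable_mul_exp_neg_mul_sq (by norm_num : (0:ℝ) < 1/2)
  have := this.const_mul ((Real.sqrt (2 * Real.pi))⁻¹)
  refine this.congr ?_
  filter_upwards with x
  rw [stdN_eq]; ring

lemma integrable_sq_stdN : Integrable (fun x : ℝ => x ^ 2 * stdN x) := by
  have h : Integrable (fun x : ℝ => x ^ (2:ℝ) * Real.exp (-((1:ℝ)/2) * x ^ 2)) := by
    simpa [sq] using integrable_rpow_mul_exp_neg_mul_sq (by norm_num : (0:ℝ) < 1/2)
      (by norm_num : (-1:ℝ) < 2)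
  have h2 : Integrable (fun x : ℝ => x ^ 2 * Real.exp (-((1:ℝ)/2) * x ^ 2)) := by
    refine h.congr ?_
    filter_upwards with x
    rw [show ((2:ℝ)) = ((2:ℕ):ℝ) by norm_num, Real.rpow_natCast]
  have := h2.const_mul ((Real.sqrt (2 * Real.pi))⁻¹)
  refine this.congr ?_
  filter_upwards with x
  rw [stdN_eq]; ring

/-! ### Double sum / variance identities -/

lemma sum_if_lt_eq {n : ℕ} (f : Fin n → Fin n → ℝ)
    (hsymm : ∀ j k, f j k = f k j) (hdiag : ∀ j, f j j = 0) :
    (∑ j : Fin n, ∑ k : Fin n, if j < k then f j k else 0)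
      = (1/2) * ∑ j : Fin n, ∑ k : Fin n, f j k := by
  have key : ∀ j k : Fin n, f j k =
      (if j < k then f j k else 0) + (if k < j then f j k else 0) := by
    intro j k
    rcases lt_trichotomy j k with h | h | h
    · simp [h, not_lt.2 h.le]
    · subst h; simp [hdiag]
    · simp [h, not_lt.2 h.le]
  have h2 : (∑ j : Fin n, ∑ k : Fin n, if k < j then f j k else 0)
      = ∑ j : Fin n, ∑ k : Fin n, if j < k then f j k else 0 := by
    rw [Finset.sum_comm]
    refine Finset.sum_congr rfl fun j _ => Finset.sum_congr rfl fun k _ => ?_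
    rw [hsymm]
  calc (∑ j : Fin n, ∑ k : Fin n, if j < k then f j k else 0)
      = (1/2) * ((∑ j : Fin n, ∑ k : Fin n, if j < k then f j k else 0)
          + ∑ j : Fin n, ∑ k : Fin n, if k < j then f j k else 0) := by rw [h2]; ring
    _ = (1/2) * ∑ j : Fin n, ∑ k : Fin n, f j k := by
        rw [← Finset.sum_add_distrib]
        congr 1
        refine Finset.sum_congr rfl fun j _ => ?_
        rw [← Finset.sum_add_distrib]
        exact Finset.sum_congr rfl fun k _ => (key j k).symm

lemma var_ident {n : ℕ} (ρ a : Fin n → ℝ) (hρ : ∑ j : Fin n, ρ j = 1) :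
    (∑ j : Fin n, ∑ k : Fin n, if j < k then ρ j * ρ k * (a j - a k) ^ 2 else 0)
      = (∑ j : Fin n, ρ j * a j ^ 2) - (∑ j : Fin n, ρ j * a j) ^ 2 := by
  rw [sum_if_lt_eq _ (fun j k => by ring) (fun j => by ring)]
  set S1 := ∑ j : Fin n, ρ j * a j ^ 2 with hS1
  set S2 := ∑ j : Fin n, ρ j * a j with hS2
  have e1 : ∀ j : Fin n, (∑ k : Fin n, ρ j * ρ k * (a j - a k) ^ 2)
      = ρ j * a j ^ 2 + ρ j * S1 - 2 * (ρ j * a j * S2) := by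
    intro j
    have expand : ∀ k : Fin n, ρ j * ρ k * (a j - a k) ^ 2
        = (ρ j * a j ^ 2) * ρ k + ρ j * (ρ k * a k ^ 2) - 2 * (ρ j * a j * (ρ k * a k)) := by
      intro k; ring
    rw [Finset.sum_congr rfl fun k _ => expand k, Finset.sum_sub_distrib,
      Finset.sum_add_distrib, ← Finset.mul_sum, ← Finset.mul_sum, ← Finset.mul_sum,
      ← Finset.mul_sum, hρ, hS1, hS2, mul_one]
  rw [Finset.sum_congr rfl fun j _ => e1 j, Finset.sum_sub_distrib, Finset.sum_add_distrib,
    ← Finset.sum_mul, ← Finset.mul_sum, ← Finset.sum_mul, hρ, ← hS1, ← hS2]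
  ring

lemma cs_bound {n : ℕ} (ρ a : Fin n → ℝ) (hρ0 : ∀ j, 0 ≤ ρ j) (hρ : ∑ j : Fin n, ρ j = 1) :
    (∑ j : Fin n, ρ j * a j) ^ 2 ≤ ∑ j : Fin n, a j ^ 2 := by
  have h1 : (∑ j : Fin n, ρ j * a j) ^ 2
      ≤ (∑ j : Fin n, ρ j) * ∑ j : Fin n, ρ j * a j ^ 2 := by
    have := Finset.sum_mul_sq_le_sq_mul_sq Finset.univ
      (fun j => Real.sqrt (ρ j)) (fun j => Real.sqrt (ρ j) * a j)
    have e : ∀ j : Fin n, Real.sqrt (ρ j) * (Real.sqrt (ρ j) * a j) = ρ j * a j := by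
      intro j
      rw [← mul_assoc, Real.mul_self_sqrt (hρ0 j)]
    have e2 : ∀ j : Fin n, Real.sqrt (ρ j) ^ 2 = ρ j := fun j => Real.sq_sqrt (hρ0 j)
    have e3 : ∀ j : Fin n, (Real.sqrt (ρ j) * a j) ^ 2 = ρ j * a j ^ 2 := by
      intro j; rw [mul_pow, e2]
    calc (∑ j : Fin n, ρ j * a j) ^ 2
        = (∑ j : Fin n, Real.sqrt (ρ j) * (Real.sqrt (ρ j) * a j)) ^ 2 := by
          rw [Finset.sum_congr rfl fun j _ => (e j).symm]
      _ ≤ (∑ j : Fin n, Real.sqrt (ρ j) ^ 2) * ∑ j : Fin n, (Real.sqrt (ρ j) * a j) ^ 2 := this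
      _ = (∑ j : Fin n, ρ j) * ∑ j : Fin n, ρ j * a j ^ 2 := by
          rw [Finset.sum_congr rfl fun j _ => e2 j, Finset.sum_congr rfl fun j _ => e3 j]
  rw [hρ, one_mul] at h1
  refine h1.trans (Finset.sum_le_sum fun j _ => ?_)
  have hj1 : ρ j ≤ 1 := by
    calc ρ j ≤ ∑ k : Fin n, ρ k := Finset.single_le_sum (fun k _ => hρ0 k) (Finset.mem_univ j)
      _ = 1 := hρ
  nlinarith [sq_nonneg (a j), hρ0 j]

lemma abs_sum_bound {n : ℕ} (ρ a : Fin n → ℝ) (hρ0 : ∀ j, 0 ≤ ρ j)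
    (hρ : ∑ j : Fin n, ρ j = 1) :
    |∑ j : Fin n, ρ j * a j| ≤ ∑ j : Fin n, |a j| := by
  refine (Finset.abs_sum_le_sum_abs _ _).trans (Finset.sum_le_sum fun j _ => ?_)
  have hj1 : ρ j ≤ 1 := by
    calc ρ j ≤ ∑ k : Fin n, ρ k := Finset.single_le_sum (fun k _ => hρ0 k) (Finset.mem_univ j)
      _ = 1 := hρ
  rw [abs_mul, abs_of_nonneg (hρ0 j)]
  nlinarith [abs_nonneg (a j)]

/-! ### Core single-coordinate identity -/

section Core

variable (d : ℕ) (w : Fin (d + 1) → ℝ) (g : Fin (d + 1) → ℝ → ℝ)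

lemma mmix_pos (hw : ∀ j, 0 ≤ w j) (hwsum : ∑ j : Fin (d + 1), w j = 1)
    (hgpos : ∀ j x, 0 < g j x) (x : ℝ) : 0 < mmix d w g x := by
  obtain ⟨j, hj⟩ : ∃ j, 0 < w j := by
    by_contra h
    push_neg at h
    have : ∀ j : Fin (d + 1), w j = 0 := fun j => le_antisymm (h j) (hw j)
    simp [this] at hwsum
  refine Finset.sum_pos' (fun k _ => mul_nonneg (hw k) (hgpos k x).le) ⟨j, Finset.mem_univ j, ?_⟩
  exact mul_pos hj (hgpos j x)

lemma hasDerivAt_mmix (hgdiff : ∀ j, Differentiable ℝ (g j)) (x : ℝ) :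
    HasDerivAt (mmix d w g) (∑ j : Fin (d + 1), w j * deriv (g j) x) x := by
  have : HasDerivAt (fun y => ∑ j : Fin (d + 1), w j * g j y)
      (∑ j : Fin (d + 1), w j * deriv (g j) x) x :=
    HasDerivAt.fun_sum fun j _ => ((hgdiff j x).hasDerivAt).const_mul (w j)
  exact this

lemma hasDerivAt_M1 (hgdiff2 : ∀ j, Differentiable ℝ (deriv (g j))) (x : ℝ) :
    HasDerivAt (fun y => ∑ j : Fin (d + 1), w j * deriv (g j) y)
      (∑ j : Fin (d + 1), w j * deriv (deriv (g j)) x) x :=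
  HasDerivAt.fun_sum fun j _ => ((hgdiff2 j x).hasDerivAt).const_mul (w j)

lemma deriv_log_mmix (hw : ∀ j, 0 ≤ w j) (hwsum : ∑ j : Fin (d + 1), w j = 1)
    (hgpos : ∀ j x, 0 < g j x) (hgdiff : ∀ j, Differentiable ℝ (g j)) (x : ℝ) :
    deriv (fun y => Real.log (mmix d w g y)) x
      = (∑ j : Fin (d + 1), w j * deriv (g j) x) / mmix d w g x :=
  ((hasDerivAt_mmix d w g hgdiff x).log (mmix_pos d w g hw hwsum hgpos x).ne').deriv

lemma deriv_log_g (hgpos : ∀ j x, 0 < g j x) (hgdiff : ∀ j, Differentiable ℝ (g j))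
    (j : Fin (d + 1)) (x : ℝ) :
    deriv (fun y => Real.log (g j y)) x = deriv (g j) x / g j x :=
  (((hgdiff j x).hasDerivAt).log (hgpos j x).ne').deriv

/-- Pointwise algebraic identity: `D(x) = (m'/m)² − 2m''/m`. -/
lemma Dfun_eq (hw : ∀ j, 0 ≤ w j) (hwsum : ∑ j : Fin (d + 1), w j = 1)
    (hgpos : ∀ j x, 0 < g j x) (hgdiff : ∀ j, Differentiable ℝ (g j)) (x : ℝ) :
    Dfun d w g x
      = ((∑ j : Fin (d + 1), w j * deriv (g j) x) / mmix d w g x) ^ 2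
        - 2 * (∑ j : Fin (d + 1), w j * deriv (deriv (g j)) x) / mmix d w g x := by
  have hm := mmix_pos d w g hw hwsum hgpos x
  have hρsum : ∑ j : Fin (d + 1), rho d w g j x = 1 := by
    unfold rho
    rw [← Finset.sum_div]
    exact div_self (by rw [← mmix]; exact hm.ne')
  set a : Fin (d + 1) → ℝ := fun j => deriv (fun y => Real.log (g j y)) x with ha
  have hzd : ∀ j k : Fin (d + 1), zetaj d g j x - zetaj d g k x = a j - a k := by
    intro j k; unfold zetaj; rw [ha]; ring
  have hvar : (∑ j : Fin (d + 1), ∑ k : Fin (d + 1),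
      if j < k then rho d w g j x * rho d w g k x * (zetaj d g j x - zetaj d g k x) ^ 2 else 0)
      = (∑ j : Fin (d + 1), rho d w g j x * a j ^ 2)
        - (∑ j : Fin (d + 1), rho d w g j x * a j) ^ 2 := by
    rw [← var_ident (fun j => rho d w g j x) a hρsum]
    refine Finset.sum_congr rfl fun j _ => Finset.sum_congr rfl fun k _ => ?_
    rw [hzd j k]
  have hra : ∀ j : Fin (d + 1), rho d w g j x * a j = w j * deriv (g j) x / mmix d w g x := by
    intro j
    rw [ha]
    simp only
    rw [deriv_log_g d g hgpos hgdiff j x]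
    unfold rho
    have h1 : g j x ≠ 0 := (hgpos j x).ne'
    have h2 : mmix d w g x ≠ 0 := hm.ne'
    field_simp
  have hrsum : (∑ j : Fin (d + 1), rho d w g j x * a j)
      = (∑ j : Fin (d + 1), w j * deriv (g j) x) / mmix d w g x := by
    rw [Finset.sum_congr rfl fun j _ => hra j, ← Finset.sum_div]
  have hrD : ∀ j : Fin (d + 1), rho d w g j x * Dj d g j x
      = rho d w g j x * a j ^ 2 - 2 * (w j * deriv (deriv (g j)) x) / mmix d w g x := by
    intro j
    unfold Dj rho
    rw [ha]
    simp only
    rw [deriv_log_g d g hgpos hgdiff j x]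
    have h1 : g j x ≠ 0 := (hgpos j x).ne'
    have h2 : mmix d w g x ≠ 0 := hm.ne'
    field_simp
  have hDsum : (∑ j : Fin (d + 1), rho d w g j x * Dj d g j x)
      = (∑ j : Fin (d + 1), rho d w g j x * a j ^ 2)
        - 2 * (∑ j : Fin (d + 1), w j * deriv (deriv (g j)) x) / mmix d w g x := by
    rw [Finset.sum_congr rfl fun j _ => hrD j, Finset.sum_sub_distrib]
    congr 1
    rw [← Finset.sum_div, Finset.mul_sum]
  unfold Dfun
  rw [hvar, hDsum, hrsum]
  ring

end Core

noncomputable def M1f (d : ℕ) (w : Fin (d + 1) → ℝ) (g : Fin (d + 1) → ℝ → ℝ) (x : ℝ) : ℝ :=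
  ∑ j : Fin (d + 1), w j * deriv (g j) x

noncomputable def M2f (d : ℕ) (w : Fin (d + 1) → ℝ) (g : Fin (d + 1) → ℝ → ℝ) (x : ℝ) : ℝ :=
  ∑ j : Fin (d + 1), w j * deriv (deriv (g j)) x

noncomputable def Hf (d : ℕ) (w : Fin (d + 1) → ℝ) (g : Fin (d + 1) → ℝ → ℝ) (x : ℝ) : ℝ :=
  M1f d w g x / mmix d w g x

section Core2

variable (d : ℕ) (w : Fin (d + 1) → ℝ) (g : Fin (d + 1) → ℝ → ℝ)

lemma cont_mmix (hgdiff : ∀ j, Differentiable ℝ (g j)) : Continuous (mmix d w g) := by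
  unfold mmix
  exact continuous_finset_sum _ fun j _ => continuous_const.mul (hgdiff j).continuous

lemma cont_M1 (hgdiff2 : ∀ j, Differentiable ℝ (deriv (g j))) : Continuous (M1f d w g) := by
  unfold M1f
  exact continuous_finset_sum _ fun j _ => continuous_const.mul (hgdiff2 j).continuous

lemma cont_Hf (hw : ∀ j, 0 ≤ w j) (hwsum : ∑ j : Fin (d + 1), w j = 1)
    (hgpos : ∀ j x, 0 < g j x) (hgdiff : ∀ j, Differentiable ℝ (g j))
    (hgdiff2 : ∀ j, Differentiable ℝ (deriv (g j))) : Continuous (Hf d w g) :=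
  (cont_M1 d w g hgdiff2).div (cont_mmix d w g hgdiff)
    (fun x => (mmix_pos d w g hw hwsum hgpos x).ne')

lemma hasDerivAt_Hf (hw : ∀ j, 0 ≤ w j) (hwsum : ∑ j : Fin (d + 1), w j = 1)
    (hgpos : ∀ j x, 0 < g j x) (hgdiff : ∀ j, Differentiable ℝ (g j))
    (hgdiff2 : ∀ j, Differentiable ℝ (deriv (g j))) (x : ℝ) :
    HasDerivAt (Hf d w g) (M2f d w g x / mmix d w g x - Hf d w g x ^ 2) x := by
  have hm := mmix_pos d w g hw hwsum hgpos x
  have h1 : HasDerivAt (fun y => ∑ j : Fin (d + 1), w j * deriv (g j) y)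
      (M2f d w g x) x := hasDerivAt_M1 d w g hgdiff2 x
  have h2 := hasDerivAt_mmix d w g hgdiff x
  have h3 := h1.div h2 hm.ne'
  have : HasDerivAt (Hf d w g)
      ((M2f d w g x * mmix d w g x - (∑ j : Fin (d + 1), w j * deriv (g j) x) * M1f d w g x)
        / mmix d w g x ^ 2) x := by
    exact h3.congr_deriv (by unfold M1f; ring)
  refine this.congr_deriv ?_
  unfold Hf M1f
  field_simp

lemma rho_nonneg (hw : ∀ j, 0 ≤ w j) (hwsum : ∑ j : Fin (d + 1), w j = 1)
    (hgpos : ∀ j x, 0 < g j x) (j : Fin (d + 1)) (x : ℝ) : 0 ≤ rho d w g j x :=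
  div_nonneg (mul_nonneg (hw j) (hgpos j x).le) (mmix_pos d w g hw hwsum hgpos x).le

lemma rho_sum_one (hw : ∀ j, 0 ≤ w j) (hwsum : ∑ j : Fin (d + 1), w j = 1)
    (hgpos : ∀ j x, 0 < g j x) (x : ℝ) : ∑ j : Fin (d + 1), rho d w g j x = 1 := by
  unfold rho
  rw [← Finset.sum_div]
  exact div_self (by rw [← mmix]; exact (mmix_pos d w g hw hwsum hgpos x).ne')

lemma Hf_eq_sum (hw : ∀ j, 0 ≤ w j) (hwsum : ∑ j : Fin (d + 1), w j = 1)
    (hgpos : ∀ j x, 0 < g j x) (hgdiff : ∀ j, Differentiable ℝ (g j)) (x : ℝ) :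
    Hf d w g x = ∑ j : Fin (d + 1), rho d w g j x * deriv (fun y => Real.log (g j y)) x := by
  have hm := mmix_pos d w g hw hwsum hgpos x
  have hra : ∀ j : Fin (d + 1),
      rho d w g j x * deriv (fun y => Real.log (g j y)) x
        = w j * deriv (g j) x / mmix d w g x := by
    intro j
    rw [deriv_log_g d g hgpos hgdiff j x]
    unfold rho
    have h1 : g j x ≠ 0 := (hgpos j x).ne'
    have h2 : mmix d w g x ≠ 0 := hm.ne'
    field_simp
  rw [Finset.sum_congr rfl fun j _ => hra j, ← Finset.sum_div]
  rfl

lemma Hf_sq_le (hw : ∀ j, 0 ≤ w j) (hwsum : ∑ j : Fin (d + 1), w j = 1)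
    (hgpos : ∀ j x, 0 < g j x) (hgdiff : ∀ j, Differentiable ℝ (g j)) (x : ℝ) :
    Hf d w g x ^ 2 ≤ ∑ j : Fin (d + 1), (deriv (fun y => Real.log (g j y)) x) ^ 2 := by
  rw [Hf_eq_sum d w g hw hwsum hgpos hgdiff x]
  exact cs_bound _ _ (fun j => rho_nonneg d w g hw hwsum hgpos j x)
    (rho_sum_one d w g hw hwsum hgpos x)

lemma Hf_abs_le (hw : ∀ j, 0 ≤ w j) (hwsum : ∑ j : Fin (d + 1), w j = 1)
    (hgpos : ∀ j x, 0 < g j x) (hgdiff : ∀ j, Differentiable ℝ (g j)) (x : ℝ) :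
    |Hf d w g x| ≤ ∑ j : Fin (d + 1), |deriv (fun y => Real.log (g j y)) x| := by
  rw [Hf_eq_sum d w g hw hwsum hgpos hgdiff x]
  exact abs_sum_bound _ _ (fun j => rho_nonneg d w g hw hwsum hgpos j x)
    (rho_sum_one d w g hw hwsum hgpos x)

lemma wg_le_mmix (hw : ∀ j, 0 ≤ w j) (hgpos : ∀ j x, 0 < g j x) (j : Fin (d + 1)) (x : ℝ) :
    w j * g j x ≤ mmix d w g x :=
  Finset.single_le_sum (fun k _ => mul_nonneg (hw k) (hgpos k x).le) (Finset.mem_univ j)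

lemma M2_div_bound (hw : ∀ j, 0 ≤ w j) (hwsum : ∑ j : Fin (d + 1), w j = 1)
    (hgpos : ∀ j x, 0 < g j x) (x : ℝ) :
    |M2f d w g x / mmix d w g x|
      ≤ ∑ j : Fin (d + 1), |deriv (deriv (g j)) x / g j x| := by
  have hm := mmix_pos d w g hw hwsum hgpos x
  rw [abs_div, abs_of_pos hm]
  have h1 : |M2f d w g x| ≤ ∑ j : Fin (d + 1), w j * |deriv (deriv (g j)) x| := by
    refine (Finset.abs_sum_le_sum_abs _ _).trans (Finset.sum_le_sum fun j _ => ?_)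
    rw [abs_mul, abs_of_nonneg (hw j)]
  calc |M2f d w g x| / mmix d w g x
      ≤ (∑ j : Fin (d + 1), w j * |deriv (deriv (g j)) x|) / mmix d w g x := by gcongr
    _ = ∑ j : Fin (d + 1), w j * |deriv (deriv (g j)) x| / mmix d w g x := Finset.sum_div _ _ _
    _ ≤ ∑ j : Fin (d + 1), |deriv (deriv (g j)) x / g j x| := by
        refine Finset.sum_le_sum fun j _ => ?_
        rw [abs_div, abs_of_pos (hgpos j x), div_le_div_iff₀ hm (hgpos j x)]
        have hle := wg_le_mmix d w g hw hgpos j x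
        nlinarith [abs_nonneg (deriv (deriv (g j)) x),
          mul_le_mul_of_nonneg_left hle (abs_nonneg (deriv (deriv (g j)) x))]

end Core2

/-- The core one-dimensional SURE identity. -/
lemma core_identity (d : ℕ) (w : Fin (d + 1) → ℝ) (g : Fin (d + 1) → ℝ → ℝ) (c : ℝ)
    (hw : ∀ j, 0 ≤ w j) (hwsum : ∑ j : Fin (d + 1), w j = 1)
    (hgpos : ∀ j x, 0 < g j x)
    (hgdiff : ∀ j, Differentiable ℝ (g j))
    (hgdiff2 : ∀ j, Differentiable ℝ (deriv (g j)))
    (hint1 : ∀ j : Fin (d + 1),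
      Integrable (fun x : ℝ => (deriv (deriv (g j)) x / g j x) * stdN (x - c)))
    (hint2 : ∀ j : Fin (d + 1),
      Integrable (fun x : ℝ => (deriv (fun y => Real.log (g j y)) x) ^ 2 * stdN (x - c))) :
    (∫ x : ℝ, (c - zeta d w g x) ^ 2 * stdN (x - c))
      = 1 - ∫ x : ℝ, Dfun d w g x * stdN (x - c) := by
  have hm : ∀ x, 0 < mmix d w g x := mmix_pos d w g hw hwsum hgpos
  have contφ : Continuous (fun x : ℝ => stdN (x - c)) :=
    stdN_continuous.comp (continuous_id.sub continuous_const)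
  have contH : Continuous (Hf d w g) := cont_Hf d w g hw hwsum hgpos hgdiff hgdiff2
  have intφ : Integrable (fun x : ℝ => stdN (x - c)) := integrable_stdN.comp_sub_right c
  have intxφ : Integrable (fun x : ℝ => (x - c) * stdN (x - c)) :=
    integrable_mul_stdN.comp_sub_right c
  have intx2φ : Integrable (fun x : ℝ => (x - c) ^ 2 * stdN (x - c)) :=
    integrable_sq_stdN.comp_sub_right c
  have intsumA2 : Integrable (fun x : ℝ =>
      (∑ j : Fin (d + 1), (deriv (fun y => Real.log (g j y)) x) ^ 2) * stdN (x - c)) := by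
    have h := integrable_finset_sum (μ := (volume : Measure ℝ)) Finset.univ
      (fun j (_ : j ∈ Finset.univ) => hint2 j)
    refine h.congr ?_
    filter_upwards with x
    rw [Finset.sum_mul]
  have intH2φ : Integrable (fun x : ℝ => Hf d w g x ^ 2 * stdN (x - c)) := by
    refine intsumA2.mono' (((contH.pow 2).mul contφ).aestronglyMeasurable) ?_
    filter_upwards with x
    rw [Real.norm_eq_abs, abs_of_nonneg (mul_nonneg (sq_nonneg _) (stdN_pos _).le)]
    exact mul_le_mul_of_nonneg_right (Hf_sq_le d w g hw hwsum hgpos hgdiff x) (stdN_pos _).le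
  have intabsA : ∀ j, Integrable (fun x : ℝ => |deriv (deriv (g j)) x / g j x| * stdN (x - c)) := by
    intro j
    refine (hint1 j).norm.congr ?_
    filter_upwards with x
    rw [norm_mul, Real.norm_eq_abs, Real.norm_eq_abs, abs_of_pos (stdN_pos _)]
  have intsumB : Integrable (fun x : ℝ =>
      (∑ j : Fin (d + 1), |deriv (deriv (g j)) x / g j x|) * stdN (x - c)) := by
    have h := integrable_finset_sum (μ := (volume : Measure ℝ)) Finset.univ
      (fun j (_ : j ∈ Finset.univ) => intabsA j)
    refine h.congr ?_
    filter_upwards with x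
    rw [Finset.sum_mul]
  have intM2φ : Integrable (fun x : ℝ => (M2f d w g x / mmix d w g x) * stdN (x - c)) := by
    refine intsumB.mono' ?_ ?_
    · apply Measurable.aestronglyMeasurable
      refine Measurable.mul ?_ contφ.measurable
      refine Measurable.div ?_ (cont_mmix d w g hgdiff).measurable
      exact Finset.measurable_sum _ fun j _ => measurable_const.mul (measurable_deriv _)
    · filter_upwards with x
      rw [Real.norm_eq_abs, abs_mul, abs_of_pos (stdN_pos _)]
      exact mul_le_mul_of_nonneg_right (M2_div_bound d w g hw hwsum hgpos x) (stdN_pos _).le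
  have intH'φ : Integrable (fun x : ℝ =>
      (M2f d w g x / mmix d w g x - Hf d w g x ^ 2) * stdN (x - c)) := by
    refine (intM2φ.sub intH2φ).congr ?_
    filter_upwards with x
    simp only [Pi.sub_apply]
    ring
  have intHφ : Integrable (fun x : ℝ => Hf d w g x * stdN (x - c)) := by
    have intB : Integrable (fun x : ℝ =>
        (((d : ℝ) + 1) + ∑ j : Fin (d + 1), (deriv (fun y => Real.log (g j y)) x) ^ 2)
          * stdN (x - c)) := by
      refine ((intφ.const_mul ((d : ℝ) + 1)).add intsumA2).congr ?_
      filter_upwards with x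
      simp only [Pi.add_apply]
      ring
    refine intB.mono' ((contH.mul contφ).aestronglyMeasurable) ?_
    filter_upwards with x
    rw [Real.norm_eq_abs, abs_mul, abs_of_pos (stdN_pos _)]
    refine mul_le_mul_of_nonneg_right ?_ (stdN_pos _).le
    refine (Hf_abs_le d w g hw hwsum hgpos hgdiff x).trans ?_
    have hb : ∀ j : Fin (d + 1), |deriv (fun y => Real.log (g j y)) x|
        ≤ 1 + (deriv (fun y => Real.log (g j y)) x) ^ 2 := by
      intro j
      nlinarith [sq_nonneg (|deriv (fun y => Real.log (g j y)) x| - 1),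
        sq_abs (deriv (fun y => Real.log (g j y)) x),
        abs_nonneg (deriv (fun y => Real.log (g j y)) x)]
    calc (∑ j : Fin (d + 1), |deriv (fun y => Real.log (g j y)) x|)
        ≤ ∑ j : Fin (d + 1), (1 + (deriv (fun y => Real.log (g j y)) x) ^ 2) :=
          Finset.sum_le_sum fun j _ => hb j
      _ = ((d : ℝ) + 1) + ∑ j : Fin (d + 1), (deriv (fun y => Real.log (g j y)) x) ^ 2 := by
          rw [Finset.sum_add_distrib, Finset.sum_const, Finset.card_univ, Fintype.card_fin]
          push_cast
          ring
  have intxHφ : Integrable (fun x : ℝ => (x - c) * Hf d w g x * stdN (x - c)) := by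
    have intB : Integrable (fun x : ℝ =>
        ((x - c) ^ 2 + ∑ j : Fin (d + 1), (deriv (fun y => Real.log (g j y)) x) ^ 2)
          * stdN (x - c)) := by
      refine (intx2φ.add intsumA2).congr ?_
      filter_upwards with x
      simp only [Pi.add_apply]
      ring
    refine intB.mono'
      ((((continuous_id.sub continuous_const).mul contH).mul contφ).aestronglyMeasurable) ?_
    filter_upwards with x
    rw [Real.norm_eq_abs, abs_mul, abs_of_pos (stdN_pos _)]
    refine mul_le_mul_of_nonneg_right ?_ (stdN_pos _).le
    have h1 : |(x - c) * Hf d w g x| ≤ (x - c) ^ 2 + Hf d w g x ^ 2 := by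
      rw [abs_mul]
      nlinarith [sq_nonneg (|x - c| - |Hf d w g x|), sq_abs (x - c), sq_abs (Hf d w g x),
        abs_nonneg (x - c), abs_nonneg (Hf d w g x),
        mul_nonneg (abs_nonneg (x - c)) (abs_nonneg (Hf d w g x))]
    refine h1.trans ?_
    have := Hf_sq_le d w g hw hwsum hgpos hgdiff x
    linarith
  have hφd : ∀ x : ℝ, HasDerivAt (fun y => stdN (y - c)) (-(x - c) * stdN (x - c)) x := by
    intro x
    have h1 : HasDerivAt (fun y : ℝ => y - c) 1 x := (hasDerivAt_id x).sub_const c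
    have := (hasDerivAt_stdN (x - c)).comp x h1
    exact this.congr_deriv (by ring)
  have Eφ : ∫ x : ℝ, stdN (x - c) = 1 := by
    rw [integral_sub_right_eq_self (fun y => stdN y) c]
    exact integral_stdN
  have E2 : ∫ x : ℝ, (x - c) ^ 2 * stdN (x - c) = 1 := by
    have hu : ∀ x : ℝ, HasDerivAt (fun y : ℝ => y - c) ((fun _ : ℝ => (1 : ℝ)) x) x :=
      fun x => (hasDerivAt_id x).sub_const c
    have key := integral_mul_deriv_eq_deriv_mul_of_integrable (fun x _ => hu x) (fun x _ => hφd x) ?_ ?_ ?_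
    · have l1 : (fun x : ℝ => (x - c) * (-(x - c) * stdN (x - c)))
          = fun x : ℝ => -((x - c) ^ 2 * stdN (x - c)) := funext fun x => by ring
      rw [show (∫ x : ℝ, (x - c) * (-(x - c) * stdN (x - c)))
            = ∫ x : ℝ, -((x - c) ^ 2 * stdN (x - c)) by rw [l1]] at key
      rw [integral_neg] at key
      have l2 : (∫ x : ℝ, (fun _ : ℝ => (1 : ℝ)) x * stdN (x - c)) = 1 := by
        simpa using Eφ
      rw [l2] at key
      linarith
    · refine (intx2φ.neg).congr ?_
      filter_upwards with x
      simp only [Pi.neg_apply, Pi.mul_apply]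
      ring
    · refine intφ.congr ?_
      filter_upwards with x
      simp only [Pi.mul_apply, one_mul]
    · exact intxφ
  have IBP : ∫ x : ℝ, (x - c) * Hf d w g x * stdN (x - c)
      = ∫ x : ℝ, (M2f d w g x / mmix d w g x - Hf d w g x ^ 2) * stdN (x - c) := by
    have hH : ∀ x : ℝ, HasDerivAt (Hf d w g)
        ((fun x => M2f d w g x / mmix d w g x - Hf d w g x ^ 2) x) x :=
      fun x => hasDerivAt_Hf d w g hw hwsum hgpos hgdiff hgdiff2 x
    have key := integral_mul_deriv_eq_deriv_mul_of_integrable (fun x _ => hH x) (fun x _ => hφd x) ?_ ?_ ?_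
    · have l1 : (fun x : ℝ => Hf d w g x * (-(x - c) * stdN (x - c)))
          = fun x : ℝ => -((x - c) * Hf d w g x * stdN (x - c)) := funext fun x => by ring
      rw [show (∫ x : ℝ, Hf d w g x * (-(x - c) * stdN (x - c)))
            = ∫ x : ℝ, -((x - c) * Hf d w g x * stdN (x - c)) by rw [l1]] at key
      rw [integral_neg] at key
      linarith
    · refine (intxHφ.neg).congr ?_
      filter_upwards with x
      simp only [Pi.neg_apply, Pi.mul_apply]
      ring
    · refine intH'φ.congr ?_
      filter_upwards with x
      simp only [Pi.mul_apply]
    · exact intHφ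
  have hzeta : ∀ x : ℝ, zeta d w g x = x + Hf d w g x := by
    intro x
    unfold zeta Hf M1f
    rw [deriv_log_mmix d w g hw hwsum hgpos hgdiff x]
  have ldecomp : (fun x : ℝ => (c - zeta d w g x) ^ 2 * stdN (x - c))
      = fun x : ℝ => (x - c) ^ 2 * stdN (x - c)
          + (2 * ((x - c) * Hf d w g x * stdN (x - c)) + Hf d w g x ^ 2 * stdN (x - c)) := by
    funext x
    rw [hzeta x]
    ring
  have rdecomp : (∫ x : ℝ, Dfun d w g x * stdN (x - c))
      = ∫ x : ℝ, (Hf d w g x ^ 2 * stdN (x - c)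
          - 2 * ((M2f d w g x / mmix d w g x) * stdN (x - c))) := by
    congr 1
    funext x
    have hD : Dfun d w g x = Hf d w g x ^ 2 - 2 * (M2f d w g x / mmix d w g x) := by
      rw [Dfun_eq d w g hw hwsum hgpos hgdiff x]
      unfold Hf M1f M2f
      ring
    rw [hD]
    ring
  have split : (∫ x : ℝ, (M2f d w g x / mmix d w g x - Hf d w g x ^ 2) * stdN (x - c))
      = (∫ x : ℝ, (M2f d w g x / mmix d w g x) * stdN (x - c))
        - ∫ x : ℝ, Hf d w g x ^ 2 * stdN (x - c) := by
    rw [← integral_sub intM2φ intH2φ]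
    congr 1
    funext x
    ring
  have int2 : Integrable (fun x : ℝ => 2 * ((x - c) * Hf d w g x * stdN (x - c))) :=
    intxHφ.const_mul 2
  have int23 : Integrable (fun x : ℝ =>
      2 * ((x - c) * Hf d w g x * stdN (x - c)) + Hf d w g x ^ 2 * stdN (x - c)) := by
    refine (int2.add intH2φ).congr ?_
    filter_upwards with x
    simp only [Pi.add_apply]
  rw [ldecomp, integral_add intx2φ int23, integral_add int2 intH2φ, integral_const_mul, E2, IBP,
    split, rdecomp, integral_sub intH2φ (intM2φ.const_mul 2), integral_const_mul]
  ring

/-- SURE risk identity for the posterior mean under a mixture marginal: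
`E ∑ᵢ (μᵢ − ζ(Xᵢ))² = p − E ∑ᵢ D(Xᵢ)` with `Xᵢ ∼ N(μᵢ,1)`. -/
theorem stmt7 (d p : ℕ) (w : Fin (d + 1) → ℝ) (g : Fin (d + 1) → ℝ → ℝ) (μv : Fin p → ℝ)
    (hw : ∀ j, 0 ≤ w j) (hwsum : ∑ j : Fin (d + 1), w j = 1)
    (hgpos : ∀ j x, 0 < g j x)
    (hgdiff : ∀ j, Differentiable ℝ (g j))
    (hgdiff2 : ∀ j, Differentiable ℝ (deriv (g j)))
    (hint1 : ∀ (i : Fin p) (j : Fin (d + 1)),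
      Integrable (fun x : ℝ => (deriv (deriv (g j)) x / g j x) * stdN (x - μv i)))
    (hint2 : ∀ (i : Fin p) (j : Fin (d + 1)),
      Integrable (fun x : ℝ => (deriv (fun y => Real.log (g j y)) x) ^ 2 * stdN (x - μv i))) :
    (∑ i : Fin p, ∫ x : ℝ, (μv i - zeta d w g x) ^ 2 * stdN (x - μv i)) =
      (p : ℝ) - ∑ i : Fin p, ∫ x : ℝ, Dfun d w g x * stdN (x - μv i) := by
  have key : ∀ i : Fin p, (∫ x : ℝ, (μv i - zeta d w g x) ^ 2 * stdN (x - μv i))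
      = 1 - ∫ x : ℝ, Dfun d w g x * stdN (x - μv i) := fun i =>
    core_identity d w g (μv i) hw hwsum hgpos hgdiff hgdiff2 (hint1 i) (hint2 i)
  rw [Finset.sum_congr rfl fun i _ => key i, Finset.sum_sub_distrib]
  simp
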